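/- arXiv:2508.05839 — 3 statements merged into one kernel-verified Lean document; each statement's English description precedes it below -/
import Mathlib

section
/- Suppose $j^1_1 \neq j^1_2$, $j^2_1 \neq j^2_2$, $j^3_1 \neq j^3_2$ are pairs of distinct elements of $\mathbb{F}_3$, and $(t_1,t_2,t_3) \in \{1,2\}^3$ satisfies $j^1_{t_1} + j^2_{t_2} + j^3_{t_3} = 0$. Then there exists $(t'_1,t'_2,t'_3) \in \{1,2\}^3$ such that either $t'_u \leq t_u$ for all $u$ and $j^1_{t'_1} + j^2_{t'_2} + j^3_{t'_3} = 1$, or $t_u \leq t'_u$ for all $u$ and $j^1_{t'_1} + j^2_{t'_2} + j^3_{t'_3} = 2$. -/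
set_option synthInstance.maxSize 2000 in
set_option maxHeartbeats 1000000 in
theorem aux_5 : ∀ a b c d e f : ZMod 3, a ≠ b → c ≠ d → e ≠ f →
    ∀ t0 t1 t2 : Fin 2, ![a,b] t0 + ![c,d] t1 + ![e,f] t2 = 0 →
    ∃ s0 s1 s2 : Fin 2,
      ((s0 ≤ t0 ∧ s1 ≤ t1 ∧ s2 ≤ t2) ∧ ![a,b] s0 + ![c,d] s1 + ![e,f] s2 = 1) ∨
      ((t0 ≤ s0 ∧ t1 ≤ s1 ∧ t2 ≤ s2) ∧ ![a,b] s0 + ![c,d] s1 + ![e,f] s2 = 2) := by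
  decide

/-- Given pairs of distinct elements `j u 0 ≠ j u 1` of `𝔽₃` for `u ∈ {1,2,3}` and
`t : Fin 3 → Fin 2` with `∑ u, j u (t u) = 0`, there is `t'` with either `t' ≤ t`
coordinatewise and sum `1`, or `t ≤ t'` coordinatewise and sum `2`. -/
theorem stmt_5 (j : Fin 3 → Fin 2 → ZMod 3) (hj : ∀ u, j u 0 ≠ j u 1)
    (t : Fin 3 → Fin 2) (ht : j 0 (t 0) + j 1 (t 1) + j 2 (t 2) = 0) :
    ∃ t' : Fin 3 → Fin 2,
      ((∀ u, t' u ≤ t u) ∧ j 0 (t' 0) + j 1 (t' 1) + j 2 (t' 2) = 1) ∨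
      ((∀ u, t u ≤ t' u) ∧ j 0 (t' 0) + j 1 (t' 1) + j 2 (t' 2) = 2) := by
  have hm : ∀ u (s : Fin 2), j u s = ![j u 0, j u 1] s := by
    intro u s; fin_cases s <;> simp
  obtain ⟨s0, s1, s2, h⟩ := aux_5 (j 0 0) (j 0 1) (j 1 0) (j 1 1) (j 2 0) (j 2 1)
    (hj 0) (hj 1) (hj 2) (t 0) (t 1) (t 2)
    (by rw [← hm 0, ← hm 1, ← hm 2]; exact ht)
  refine ⟨![s0, s1, s2], ?_⟩
  rcases h with ⟨⟨h0, h1, h2⟩, hs⟩ | ⟨⟨h0, h1, h2⟩, hs⟩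
  · left
    refine ⟨fun u => by fin_cases u <;> assumption, ?_⟩
    simpa [← hm 0, ← hm 1, ← hm 2] using hs
  · right
    refine ⟨fun u => by fin_cases u <;> assumption, ?_⟩
    simpa [← hm 0, ← hm 1, ← hm 2] using hs
end

section
/- The hypergraph $\operatorname{GS}_3(2)$ is not monotone: there do not exist linear orders $<^1, <^2, <^3$ on the three parts (each a copy of $\mathbb{F}_3^2$) such that the edge relation is monotone increasing in each coordinate with respect to these orders. -/
/-- The edge relation of `GS₃(2)`: each part is `Fin 2 → ZMod 3`, and `(x,y,z)` is an
edge iff for the least `n` with `x n + y n + z n ≠ 0` one has `x n + y n + z n = 1`. -/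
def GS32Edge (x y z : Fin 2 → ZMod 3) : Prop :=
  (x 0 + y 0 + z 0 = 1) ∨ (x 0 + y 0 + z 0 = 0 ∧ x 1 + y 1 + z 1 = 1)

/-- `GS₃(2)` is not monotone: there are no linear orders on the three parts making the
edge relation monotone increasing in each coordinate. -/
theorem stmt_6 :
    ¬ ∃ (L₁ L₂ L₃ : LinearOrder (Fin 2 → ZMod 3)),
      ∀ x x' y y' z z' : Fin 2 → ZMod 3,
        L₁.le x x' → L₂.le y y' → L₃.le z z' → GS32Edge x y z → GS32Edge x' y' z' := by
  rintro ⟨L₁, L₂, L₃, h⟩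
  set a : Fin 2 → ZMod 3 := ![1, 0] with ha
  set b : Fin 2 → ZMod 3 := ![2, 0] with hb
  rcases L₁.le_total a b with hab | hba
  · -- edge (a, 0, 0) holds, so edge (b, 0, 0) would hold: contradiction
    have h1 : GS32Edge a 0 0 := by unfold GS32Edge; left; simp [ha]
    have h2 := h a b 0 0 0 0 hab (L₂.le_refl 0) (L₃.le_refl 0) h1
    unfold GS32Edge at h2
    simp [hb] at h2
    exact absurd h2 (by decide)
  · -- edge (b, 0, (2,0)) holds, so edge (a, 0, (2,0)) would hold: contradiction
    set c : Fin 2 → ZMod 3 := ![2, 0] with hc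
    have h1 : GS32Edge b 0 c := by unfold GS32Edge; left; simp [hb, hc]; decide
    have h2 := h b a 0 0 c c hba (L₂.le_refl 0) (L₃.le_refl c) h1
    unfold GS32Edge at h2
    simp [ha, hc] at h2
    exact absurd h2 (by decide)
end

section
/- Let $f : X \times Y \to [0,1]$ be given by $f(x,y) = \mu(P_x \cap Q_y)$ where $(\Omega,\mathcal{B},\mu)$ is a probability space and $P_x, Q_y \in \mathcal{B}$ for all $x \in X$, $y \in Y$. Then $f$ is stable: for every $\delta > 0$ there is $k \in \mathbb{N}$ (one may take $k > 1 + 1/\delta^2$ or any bound from Grothendieck's inequality) such that there are no sequences $x_1,\dots,x_k \in X$, $y_1,\dots,y_k \in Y$ and $\alpha \in [0,1]$ with $f(x_i,y_j) < \alpha$ whenever $i < j$ and $f(x_i,y_j) > \alpha + \delta$ whenever $j < i$. -/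
open MeasureTheory Real Finset

noncomputable def cc (a b : ℕ) : ℝ := if a = b then 0 else ((a:ℝ) - (b:ℝ))⁻¹

noncomputable def HH (n : ℕ) : ℝ := ∑ j ∈ Finset.range n, ((j:ℝ)+1)⁻¹

lemma I2 (d : ℤ) (hd : d ≠ 0) : ∫ θ in (0:ℝ)..(2*π), Real.cos (d*θ) = 0 := by
  have hd' : (d:ℝ) ≠ 0 := Int.cast_ne_zero.mpr hd
  have hD : ∀ θ:ℝ, HasDerivAt (fun t:ℝ => Real.sin (d*t) / d) (Real.cos (d*θ)) θ := by
    intro θ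
    have h1 : HasDerivAt (fun t:ℝ => (d:ℝ)*t) d θ := by
      simpa using (hasDerivAt_id θ).const_mul (d:ℝ)
    have h2 := (Real.hasDerivAt_sin ((d:ℝ)*θ)).comp θ h1
    have h3 := h2.div_const (d:ℝ)
    refine h3.congr_deriv ?_
    field_simp
  rw [intervalIntegral.integral_eq_sub_of_hasDerivAt (fun t _ => hD t) (by apply Continuous.intervalIntegrable; fun_prop)]
  have hs : Real.sin ((d:ℝ)*(2*π)) = 0 := by
    have := Real.sin_int_mul_pi (2*d)
    push_cast at this
    convert this using 2
    ring
  simp [hs]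

lemma I1 (d : ℤ) (hd : d ≠ 0) :
    ∫ θ in (0:ℝ)..(2*π), (π - θ) * Real.sin (d*θ) = 2*π/d := by
  have hd' : (d:ℝ) ≠ 0 := Int.cast_ne_zero.mpr hd
  have hD : ∀ θ:ℝ, HasDerivAt
      (fun t:ℝ => -((π - t) * Real.cos (d*t)) / d - Real.sin (d*t) / d^2)
      ((π - θ) * Real.sin (d*θ)) θ := by
    intro θ
    have h1 : HasDerivAt (fun t:ℝ => (d:ℝ)*t) d θ := by
      simpa using (hasDerivAt_id θ).const_mul (d:ℝ)
    have hcos : HasDerivAt (fun t:ℝ => Real.cos (d*t)) (-Real.sin ((d:ℝ)*θ) * d) θ :=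
      (Real.hasDerivAt_cos ((d:ℝ)*θ)).comp θ h1
    have hsin : HasDerivAt (fun t:ℝ => Real.sin (d*t)) (Real.cos ((d:ℝ)*θ) * d) θ :=
      (Real.hasDerivAt_sin ((d:ℝ)*θ)).comp θ h1
    have hlin : HasDerivAt (fun t:ℝ => π - t) (-1) θ := by
      simpa using (hasDerivAt_id θ).const_sub π
    have hmul := hlin.mul hcos
    have h3 := ((hmul.neg.div_const (d:ℝ)).sub (hsin.div_const ((d:ℝ)^2)))
    refine h3.congr_deriv ?_
    field_simp
    ring
  rw [intervalIntegral.integral_eq_sub_of_hasDerivAt (fun t _ => hD t) (by apply Continuous.intervalIntegrable; fun_prop)]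
  have hs : Real.sin ((d:ℝ)*(2*π)) = 0 := by
    have := Real.sin_int_mul_pi (2*d)
    push_cast at this
    convert this using 2
    ring
  have hc : Real.cos ((d:ℝ)*(2*π)) = 1 := by
    have := Real.cos_int_mul_two_pi d
    convert this using 2
  simp [hs, hc]
  try field_simp
  try ring

lemma J2 (i j : ℕ) : ∫ θ in (0:ℝ)..(2*π), Real.cos (((i:ℝ)-(j:ℝ))*θ)
    = if i = j then 2*π else 0 := by
  by_cases h : i = j
  · subst h
    simp
  · have hd : (i:ℤ)-(j:ℤ) ≠ 0 := by
      intro hc; apply h; omega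
    have := I2 ((i:ℤ)-(j:ℤ)) hd
    push_cast at this
    simp [h, this]

lemma J1 (i j : ℕ) : ∫ θ in (0:ℝ)..(2*π), (π - θ) * Real.sin (((i:ℝ)-(j:ℝ))*θ)
    = 2*π * cc i j := by
  by_cases h : i = j
  · subst h
    simp [cc]
  · have hd : (i:ℤ)-(j:ℤ) ≠ 0 := by
      intro hc; apply h; omega
    have := I1 ((i:ℤ)-(j:ℤ)) hd
    push_cast at this
    rw [this, cc, if_neg h]
    rw [div_eq_mul_inv]

lemma parseval (m : ℕ) (x : Fin m → ℝ) :
    ∫ θ in (0:ℝ)..(2*π),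
      ((∑ i, x i * Real.sin (i*θ))^2 + (∑ i, x i * Real.cos (i*θ))^2)
    = 2*π * ∑ i, (x i)^2 := by
  have hexp : ∀ θ : ℝ,
      ((∑ i, x i * Real.sin (i*θ))^2 + (∑ i, x i * Real.cos (i*θ))^2)
      = ∑ i, ∑ j, (x i * x j) * Real.cos (((i:ℝ)-(j:ℝ))*θ) := by
    intro θ
    rw [sq, sq, Finset.sum_mul_sum, Finset.sum_mul_sum, ← Finset.sum_add_distrib]
    refine Finset.sum_congr rfl fun i _ => ?_
    rw [← Finset.sum_add_distrib]
    refine Finset.sum_congr rfl fun j _ => ?_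
    rw [sub_mul, Real.cos_sub]
    ring
  simp only [hexp]
  rw [intervalIntegral.integral_finset_sum]
  · have : ∀ i : Fin m, (∫ θ in (0:ℝ)..(2*π), ∑ j, (x i * x j) * Real.cos (((i:ℝ)-(j:ℝ))*θ))
        = (x i)^2 * (2*π) := by
      intro i
      rw [intervalIntegral.integral_finset_sum]
      · have : ∀ j : Fin m, (∫ θ in (0:ℝ)..(2*π), (x i * x j) * Real.cos (((i:ℝ)-(j:ℝ))*θ))
            = if (j:ℕ) = (i:ℕ) then (x i)^2 * (2*π) else 0 := by
          intro j
          rw [intervalIntegral.integral_const_mul, J2]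
          by_cases h : (i:ℕ) = (j:ℕ)
          · have : i = j := Fin.ext h
            subst this
            simp [sq]
            try ring
          · have h' : ¬ (j:ℕ) = (i:ℕ) := fun hc => h hc.symm
            simp [h, h']
        simp only [this, Fin.val_inj]
        rw [Finset.sum_ite_eq' Finset.univ i (fun _ => (x i)^2 * (2*π))]
        simp
      · intro j _
        apply Continuous.intervalIntegrable; fun_prop
    simp only [this]
    rw [← Finset.sum_mul]
    ring
  · intro i _
    apply Continuous.intervalIntegrable; fun_prop

lemma hilbert (m : ℕ) (x y : Fin m → ℝ) :
    |∑ i : Fin m, ∑ j : Fin m, cc i.1 j.1 * (x i * y j)|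
      ≤ π/2 * ((∑ i, (x i)^2) + (∑ j, (y j)^2)) := by
  have hpi := Real.pi_pos
  set Sx : ℝ → ℝ := fun θ => ∑ i, x i * Real.sin (i*θ) with hSx
  set Cx : ℝ → ℝ := fun θ => ∑ i, x i * Real.cos (i*θ) with hCx
  set Sy : ℝ → ℝ := fun θ => ∑ j, y j * Real.sin (j*θ) with hSy
  set Cy : ℝ → ℝ := fun θ => ∑ j, y j * Real.cos (j*θ) with hCy
  have hcSx : Continuous Sx := by rw [hSx]; apply continuous_finset_sum; intro i _; fun_prop
  have hcCx : Continuous Cx := by rw [hCx]; apply continuous_finset_sum; intro i _; fun_prop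
  have hcSy : Continuous Sy := by rw [hSy]; apply continuous_finset_sum; intro i _; fun_prop
  have hcCy : Continuous Cy := by rw [hCy]; apply continuous_finset_sum; intro i _; fun_prop
  have hker : ∀ θ : ℝ, (π - θ) * (Sx θ * Cy θ - Cx θ * Sy θ)
      = ∑ i : Fin m, ∑ j : Fin m, (x i * y j) * ((π - θ) * Real.sin (((i.1:ℝ)-(j.1:ℝ))*θ)) := by
    intro θ
    have h1 : Sx θ * Cy θ - Cx θ * Sy θ
        = ∑ i : Fin m, ∑ j : Fin m, (x i * y j) * Real.sin (((i.1:ℝ)-(j.1:ℝ))*θ) := by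
      rw [hSx, hSy, hCx, hCy]
      simp only [Finset.sum_mul_sum, ← Finset.sum_sub_distrib]
      refine Finset.sum_congr rfl fun i _ => Finset.sum_congr rfl fun j _ => ?_
      rw [sub_mul, Real.sin_sub]
      ring
    rw [h1, Finset.mul_sum]
    refine Finset.sum_congr rfl fun i _ => ?_
    rw [Finset.mul_sum]
    refine Finset.sum_congr rfl fun j _ => ?_
    ring
  have hident : (∫ θ in (0:ℝ)..(2*π), (π - θ) * (Sx θ * Cy θ - Cx θ * Sy θ))
      = 2*π * ∑ i : Fin m, ∑ j : Fin m, cc i.1 j.1 * (x i * y j) := by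
    simp only [hker]
    rw [intervalIntegral.integral_finset_sum]
    · have h2 : ∀ i : Fin m,
          (∫ θ in (0:ℝ)..(2*π), ∑ j : Fin m, (x i * y j) * ((π - θ) * Real.sin (((i.1:ℝ)-(j.1:ℝ))*θ)))
          = ∑ j : Fin m, (x i * y j) * (2*π*cc i.1 j.1) := by
        intro i
        rw [intervalIntegral.integral_finset_sum]
        · exact Finset.sum_congr rfl fun j _ => by
            rw [intervalIntegral.integral_const_mul, J1]
        · intro j _
          apply Continuous.intervalIntegrable; fun_prop
      simp only [h2, Finset.mul_sum]
      refine Finset.sum_congr rfl fun i _ => Finset.sum_congr rfl fun j _ => by ring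
    · intro i _
      apply Continuous.intervalIntegrable
      apply continuous_finset_sum
      intro j _
      fun_prop
  have hbound : |∫ θ in (0:ℝ)..(2*π), (π - θ) * (Sx θ * Cy θ - Cx θ * Sy θ)|
      ≤ |∫ θ in (0:ℝ)..(2*π), π * ((Sx θ^2 + Cx θ^2 + Sy θ^2 + Cy θ^2)/2)| := by
    rw [← Real.norm_eq_abs]
    apply intervalIntegral.norm_integral_le_abs_of_norm_le
    · rw [Set.uIoc_of_le (by positivity : (0:ℝ) ≤ 2*π)]
      refine (MeasureTheory.ae_restrict_iff' measurableSet_Ioc).mpr (.of_forall fun θ hθ => ?_)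
      rw [Real.norm_eq_abs, abs_mul]
      have h1 : |π - θ| ≤ π := by
        rw [abs_le]
        constructor <;> nlinarith [hθ.1, hθ.2]
      have h2 : |Sx θ * Cy θ - Cx θ * Sy θ| ≤ (Sx θ^2 + Cx θ^2 + Sy θ^2 + Cy θ^2)/2 := by
        rw [abs_le]
        constructor <;> nlinarith [sq_nonneg (Sx θ - Sy θ), sq_nonneg (Sx θ + Sy θ),
          sq_nonneg (Cx θ - Cy θ), sq_nonneg (Cx θ + Cy θ),
          sq_nonneg (Sx θ - Cy θ), sq_nonneg (Sx θ + Cy θ),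
          sq_nonneg (Cx θ - Sy θ), sq_nonneg (Cx θ + Sy θ)]
      exact mul_le_mul h1 h2 (abs_nonneg _) hpi.le
    · apply Continuous.intervalIntegrable
      fun_prop
  have hval : (∫ θ in (0:ℝ)..(2*π), π * ((Sx θ^2 + Cx θ^2 + Sy θ^2 + Cy θ^2)/2))
      = π * ((2*π * ∑ i, (x i)^2 + 2*π * ∑ j, (y j)^2)/2) := by
    rw [intervalIntegral.integral_const_mul]
    have h3 : (∫ θ in (0:ℝ)..(2*π), (Sx θ^2 + Cx θ^2 + Sy θ^2 + Cy θ^2)/2)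
        = ((∫ θ in (0:ℝ)..(2*π), (Sx θ^2 + Cx θ^2)) + (∫ θ in (0:ℝ)..(2*π), (Sy θ^2 + Cy θ^2)))/2 := by
      rw [← intervalIntegral.integral_add]
      · rw [← intervalIntegral.integral_div]
        congr 1
        funext θ
        ring
      all_goals (apply Continuous.intervalIntegrable; fun_prop)
    rw [h3]
    have hx : (∫ θ in (0:ℝ)..(2*π), (Sx θ^2 + Cx θ^2)) = 2*π * ∑ i, (x i)^2 := parseval m x
    have hy : (∫ θ in (0:ℝ)..(2*π), (Sy θ^2 + Cy θ^2)) = 2*π * ∑ j, (y j)^2 := parseval m y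
    rw [hx, hy]
  rw [hident] at hbound
  rw [hval] at hbound
  have h2pi : (0:ℝ) < 2*π := by positivity
  have habs : |2*π * ∑ i : Fin m, ∑ j : Fin m, cc i.1 j.1 * (x i * y j)|
      = 2*π * |∑ i : Fin m, ∑ j : Fin m, cc i.1 j.1 * (x i * y j)| := by
    rw [abs_mul, abs_of_pos h2pi]
  rw [habs] at hbound
  have hrhs : |π * ((2*π * ∑ i, (x i)^2 + 2*π * ∑ j, (y j)^2)/2)|
      ≤ 2*π*(π/2 * ((∑ i, (x i)^2) + (∑ j, (y j)^2))) := by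
    have hx : (0:ℝ) ≤ ∑ i, (x i)^2 := Finset.sum_nonneg fun i _ => sq_nonneg _
    have hy : (0:ℝ) ≤ ∑ j, (y j)^2 := Finset.sum_nonneg fun j _ => sq_nonneg _
    rw [abs_of_nonneg (by positivity)]
    nlinarith
  nlinarith [le_trans hbound hrhs]

lemma cc_anti (a b : ℕ) : cc b a = - cc a b := by
  unfold cc
  rcases eq_or_ne a b with h | h
  · simp [h]
  · rw [if_neg (Ne.symm h), if_neg h]
    rw [show ((b:ℝ) - a) = -((a:ℝ) - b) by ring, inv_neg]

lemma cc_pos {a b : ℕ} (h : b < a) : 0 < cc a b := by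
  unfold cc
  rw [if_neg (by omega)]
  have hba : (b:ℝ) < a := by exact_mod_cast h
  have : (0:ℝ) < (a:ℝ) - b := by linarith
  positivity

lemma HH_nonneg (n : ℕ) : 0 ≤ HH n :=
  Finset.sum_nonneg fun j _ => by positivity

lemma HH_mono {a b : ℕ} (h : a ≤ b) : HH a ≤ HH b := by
  apply Finset.sum_le_sum_of_subset_of_nonneg (Finset.range_subset_range.mpr h)
  intro j _ _; positivity

lemma HH_log (n : ℕ) : Real.log (n+1) ≤ HH n := by
  have key : ∀ j ∈ Finset.range n,
      Real.log ((j+1:ℕ)+1) - Real.log ((j:ℕ)+1) ≤ ((j:ℝ)+1)⁻¹ := by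
    intro j _
    have hj1 : (0:ℝ) < (j:ℝ)+1 := by positivity
    have hj2 : (0:ℝ) < (j:ℝ)+2 := by positivity
    have h1 : Real.log (((j:ℝ)+2)/((j:ℝ)+1)) ≤ ((j:ℝ)+2)/((j:ℝ)+1) - 1 :=
      Real.log_le_sub_one_of_pos (by positivity)
    rw [Real.log_div (by positivity) (by positivity)] at h1
    have h2 : ((j:ℝ)+2)/((j:ℝ)+1) - 1 = ((j:ℝ)+1)⁻¹ := by
      field_simp
      ring
    push_cast
    calc Real.log ((j:ℝ)+1+1) - Real.log ((j:ℝ)+1) = Real.log ((j:ℝ)+2) - Real.log ((j:ℝ)+1) := by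
          norm_num [show (j:ℝ)+1+1 = (j:ℝ)+2 by ring]
      _ ≤ ((j:ℝ)+1)⁻¹ := by rw [← h2]; linarith
  have tele := Finset.sum_range_sub (fun n : ℕ => Real.log ((n:ℝ)+1)) n
  have := Finset.sum_le_sum key
  rw [tele] at this
  · simpa [HH] using this

lemma row_sum (m : ℕ) (i : Fin m) :
    ∑ j : Fin m, (if j.1 < i.1 then cc i.1 j.1 else 0) = HH i.1 := by
  rw [Fin.sum_univ_eq_sum_range (fun t => if t < i.1 then cc i.1 t else 0) m]
  rw [← Finset.sum_subset (Finset.range_subset_range.mpr i.isLt.le)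
      (fun t _ ht => by rw [if_neg (by simpa using ht)])]
  rw [Finset.sum_congr rfl (fun t ht => if_pos (Finset.mem_range.mp ht))]
  have hcongr : ∀ t ∈ Finset.range i.1, cc i.1 t = (fun s : ℕ => ((s:ℝ)+1)⁻¹) (i.1 - 1 - t) := by
    intro t ht
    have htlt : t < i.1 := Finset.mem_range.mp ht
    simp only
    rw [cc, if_neg (by omega)]
    congr 1
    have : ((i.1 - 1 - t : ℕ) : ℝ) = (i.1 : ℝ) - 1 - t := by
      have h1 : t ≤ i.1 - 1 := by omega
      have h2 : (1:ℕ) ≤ i.1 := by omega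
      push_cast [Nat.cast_sub h1, Nat.cast_sub h2]
      ring
    rw [this]
    ring
  rw [Finset.sum_congr rfl hcongr, Finset.sum_range_reflect (fun s : ℕ => ((s:ℝ)+1)⁻¹) i.1]
  rfl

lemma Splus_ge (h : ℕ) :
    (h:ℝ) * HH h ≤ ∑ i : Fin (2*h), ∑ j : Fin (2*h), (if j.1 < i.1 then cc i.1 j.1 else 0) := by
  have hrow : ∀ i : Fin (2*h), ∑ j : Fin (2*h), (if j.1 < i.1 then cc i.1 j.1 else 0) = HH i.1 :=
    row_sum (2*h)
  rw [Finset.sum_congr rfl (fun i _ => hrow i)]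
  rw [Fin.sum_univ_eq_sum_range (fun t => HH t) (2*h)]
  rw [Finset.range_eq_Ico, ← Finset.sum_Ico_consecutive _ (Nat.zero_le h) (by omega : h ≤ 2*h)]
  have h1 : (0:ℝ) ≤ ∑ t ∈ Finset.Ico 0 h, HH t :=
    Finset.sum_nonneg fun t _ => HH_nonneg t
  have h2 : (h:ℝ) * HH h ≤ ∑ t ∈ Finset.Ico h (2*h), HH t := by
    calc (h:ℝ) * HH h = (Finset.Ico h (2*h)).card • HH h := by
          rw [Nat.card_Ico]
          simp [nsmul_eq_mul]
          left
          omega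
      _ = ∑ t ∈ Finset.Ico h (2*h), HH h := (Finset.sum_const _).symm
      _ ≤ ∑ t ∈ Finset.Ico h (2*h), HH t := by
          apply Finset.sum_le_sum
          intro t ht
          exact HH_mono (Finset.mem_Ico.mp ht).1
  linarith

/-- The function `f(x,y) = μ(Pₓ ∩ Q_y)` is stable: for every `δ > 0` there is `k` such
that no half-graph of height `k` with gap `δ` embeds into `f`. -/
theorem stmt_11 {Ω X Y : Type*} [MeasurableSpace Ω] (μ : Measure Ω) [IsProbabilityMeasure μ]
    (P : X → Set Ω) (Q : Y → Set Ω)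
    (hP : ∀ x, MeasurableSet (P x)) (hQ : ∀ y, MeasurableSet (Q y))
    (f : X → Y → ℝ) (hf : ∀ x y, f x y = (μ (P x ∩ Q y)).toReal) :
    ∀ δ : ℝ, 0 < δ → ∃ k : ℕ,
      ¬ ∃ (x : Fin k → X) (y : Fin k → Y) (α : ℝ), α ∈ Set.Icc (0:ℝ) 1 ∧
        (∀ i j : Fin k, i < j → f (x i) (y j) < α) ∧
        (∀ i j : Fin k, j < i → f (x i) (y j) > α + δ) := by
  intro δ hδ
  have hpi := Real.pi_pos
  set h : ℕ := ⌈Real.exp (4*π/δ)⌉₊ with hh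
  set m : ℕ := 2*h with hm
  refine ⟨m, ?_⟩
  rintro ⟨x, y, α, hα, hlt, hgt⟩
  have hh1 : 1 ≤ h := Nat.one_le_ceil_iff.mpr (Real.exp_pos _)
  -- indicator functions
  set pI : Fin m → Ω → ℝ := fun i ω => (P (x i)).indicator (fun _ => (1:ℝ)) ω with hpI
  set qI : Fin m → Ω → ℝ := fun j ω => (Q (y j)).indicator (fun _ => (1:ℝ)) ω with hqI
  have hprod : ∀ (i j : Fin m) (ω : Ω),
      pI i ω * qI j ω = (P (x i) ∩ Q (y j)).indicator (fun _ => (1:ℝ)) ω := by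
    intro i j ω
    rw [hpI, hqI]
    simp only [Set.indicator_apply, Set.mem_inter_iff]
    by_cases h1 : ω ∈ P (x i) <;> by_cases h2 : ω ∈ Q (y j) <;> simp [h1, h2]
  have hInt : ∀ i j : Fin m, Integrable (fun ω => pI i ω * qI j ω) μ := by
    intro i j
    simp only [hprod]
    exact (integrable_const (1:ℝ)).indicator ((hP (x i)).inter (hQ (y j)))
  have hM : ∀ i j : Fin m, f (x i) (y j) = ∫ ω, pI i ω * qI j ω ∂μ := by
    intro i j
    simp only [hprod]
    rw [MeasureTheory.integral_indicator_const (1:ℝ) ((hP (x i)).inter (hQ (y j)))]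
    rw [hf, smul_eq_mul, mul_one]; rfl
  -- the bilinear sum
  set T : ℝ := ∑ i : Fin m, ∑ j : Fin m, cc i.1 j.1 * f (x i) (y j) with hT
  -- upper bound
  have hTub : T ≤ π * m := by
    have hswap : T = ∫ ω, (∑ i : Fin m, ∑ j : Fin m, cc i.1 j.1 * (pI i ω * qI j ω)) ∂μ := by
      rw [MeasureTheory.integral_finset_sum]
      · refine Finset.sum_congr rfl fun i _ => ?_
        rw [MeasureTheory.integral_finset_sum]
        · exact Finset.sum_congr rfl fun j _ => by
            rw [MeasureTheory.integral_const_mul, ← hM]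
        · exact fun j _ => (hInt i j).const_mul _
      · exact fun i _ => integrable_finset_sum _ fun j _ => (hInt i j).const_mul _
    have hpoint : ∀ ω : Ω, ‖∑ i : Fin m, ∑ j : Fin m, cc i.1 j.1 * (pI i ω * qI j ω)‖ ≤ π * m := by
      intro ω
      rw [Real.norm_eq_abs]
      refine le_trans (hilbert m (fun i => pI i ω) (fun j => qI j ω)) ?_
      have hx : (∑ i : Fin m, (pI i ω)^2) ≤ (m:ℝ) := by
        calc (∑ i : Fin m, (pI i ω)^2) ≤ ∑ _i : Fin m, (1:ℝ) := by
              apply Finset.sum_le_sum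
              intro i _
              by_cases hω : ω ∈ P (x i) <;>
                simp [hpI, Set.indicator_of_mem, Set.indicator_of_notMem, hω]
          _ = (m:ℝ) := by simp
      have hy : (∑ j : Fin m, (qI j ω)^2) ≤ (m:ℝ) := by
        calc (∑ j : Fin m, (qI j ω)^2) ≤ ∑ _j : Fin m, (1:ℝ) := by
              apply Finset.sum_le_sum
              intro j _
              by_cases hω : ω ∈ Q (y j) <;>
                simp [hqI, Set.indicator_of_mem, Set.indicator_of_notMem, hω]
          _ = (m:ℝ) := by simp
      nlinarith
    calc T ≤ |T| := le_abs_self T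
      _ = ‖∫ ω, (∑ i : Fin m, ∑ j : Fin m, cc i.1 j.1 * (pI i ω * qI j ω)) ∂μ‖ := by
          rw [← hswap, Real.norm_eq_abs]
      _ ≤ π * m * (μ Set.univ).toReal :=
          MeasureTheory.norm_integral_le_of_norm_le_const (Filter.Eventually.of_forall hpoint)
      _ = π * m := by simp
  -- lower bound
  set Splus : ℝ := ∑ i : Fin m, ∑ j : Fin m, (if j.1 < i.1 then cc i.1 j.1 else 0) with hSplus
  have hsym : (∑ i : Fin m, ∑ j : Fin m, (if i.1 < j.1 then cc i.1 j.1 else 0)) = - Splus := by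
    rw [Finset.sum_comm]
    rw [hSplus, ← Finset.sum_neg_distrib]
    refine Finset.sum_congr rfl fun i _ => ?_
    rw [← Finset.sum_neg_distrib]
    refine Finset.sum_congr rfl fun j _ => ?_
    by_cases hij : j.1 < i.1
    · rw [if_pos hij, if_pos hij, cc_anti]
    · rw [if_neg hij, if_neg hij, neg_zero]
  have hTlb : δ * Splus ≤ T := by
    have hterm : ∀ i j : Fin m,
        (if j.1 < i.1 then (α+δ) * cc i.1 j.1 else 0) + (if i.1 < j.1 then α * cc i.1 j.1 else 0)
          ≤ cc i.1 j.1 * f (x i) (y j) := by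
      intro i j
      rcases lt_trichotomy i.1 j.1 with hij | hij | hij
      · rw [if_neg (by omega), if_pos hij, zero_add]
        have hcc : cc i.1 j.1 < 0 := by
          have := cc_pos hij
          rw [cc_anti] at this
          linarith
        have hflt : f (x i) (y j) < α := hlt i j (by exact hij)
        nlinarith
      · rw [if_neg (by omega), if_neg (by omega), cc, if_pos (by omega)]
        simp
      · rw [if_pos hij, if_neg (by omega), add_zero]
        have hcc : 0 < cc i.1 j.1 := cc_pos hij
        have hfgt : α + δ < f (x i) (y j) := hgt i j (by exact hij)
        nlinarith
    have hsum : (α+δ) * Splus + α * (- Splus) ≤ T := by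
      rw [← hsym, hT]
      have expand : (α+δ) * Splus + α * (∑ i : Fin m, ∑ j : Fin m, (if i.1 < j.1 then cc i.1 j.1 else 0))
          = ∑ i : Fin m, ∑ j : Fin m,
              ((if j.1 < i.1 then (α+δ) * cc i.1 j.1 else 0) + (if i.1 < j.1 then α * cc i.1 j.1 else 0)) := by
        rw [hSplus, Finset.mul_sum, Finset.mul_sum, ← Finset.sum_add_distrib]
        refine Finset.sum_congr rfl fun i _ => ?_
        rw [Finset.mul_sum, Finset.mul_sum, ← Finset.sum_add_distrib]
        refine Finset.sum_congr rfl fun j _ => ?_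
        rw [mul_ite, mul_ite, mul_zero, mul_zero]
      rw [expand]
      apply Finset.sum_le_sum
      intro i _
      apply Finset.sum_le_sum
      intro j _
      exact hterm i j
    nlinarith [hsum]
  -- numeric contradiction
  have hlog : 4*π/δ ≤ Real.log (h+1) := by
    have h1 : Real.exp (4*π/δ) ≤ (h:ℝ) := Nat.le_ceil _
    calc 4*π/δ = Real.log (Real.exp (4*π/δ)) := (Real.log_exp _).symm
      _ ≤ Real.log ((h:ℝ)+1) := Real.log_le_log (Real.exp_pos _) (by linarith)
  have hSp : (h:ℝ) * (4*π/δ) ≤ Splus := by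
    have h2 := Splus_ge h
    have h3 : (h:ℝ) * (4*π/δ) ≤ (h:ℝ) * HH h := by
      have := HH_log h
      have hh0 : (0:ℝ) ≤ (h:ℝ) := Nat.cast_nonneg h
      nlinarith
    rw [hSplus]
    calc (h:ℝ) * (4*π/δ) ≤ (h:ℝ) * HH h := h3
      _ ≤ _ := h2
  have hmh : (m:ℝ) = 2*(h:ℝ) := by rw [hm]; push_cast; ring
  have hfinal : δ * ((h:ℝ) * (4*π/δ)) ≤ π * m := by
    calc δ * ((h:ℝ) * (4*π/δ)) ≤ δ * Splus := by
          apply mul_le_mul_of_nonneg_left hSp hδ.le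
      _ ≤ T := hTlb
      _ ≤ π * m := hTub
  have hδh : δ * ((h:ℝ) * (4*π/δ)) = 4*π*(h:ℝ) := by
    field_simp
  rw [hδh, hmh] at hfinal
  have hhr : (1:ℝ) ≤ (h:ℝ) := by exact_mod_cast hh1
  nlinarith
end
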